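/- Let F_ε(x)=f(x)+λΣ_{i=1}^n h_{u_ε}(x_i) with u_ε=(ε/(λn))^{1/q}. Then 0 ≤ F_ε(x) − F(x) ≤ ε for all x∈ℝⁿ, where F(x)=f(x)+λ‖x‖_p^p. -/

import Mathlib

/-- h_u(t) = inf_{0<s≤u} p(|t|s - s^q/q). -/
noncomputable def hApprox (p q u t : ℝ) : ℝ :=
  sInf ((fun s : ℝ => p * (|t| * s - s ^ q / q)) '' Set.Ioc 0 u)

theorem rev_young {p q : ℝ} (hp : 0 < p) (hp1 : p < 1) (hpq : (1 - p) * q = -p)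
    {a s : ℝ} (ha : 0 ≤ a) (hs : 0 < s) : a ^ p ≤ p * (a * s - s ^ q / q) := by
  have h1p : 0 < 1 - p := by linarith
  have hq0 : q < 0 := by nlinarith
  have hqne : q ≠ 0 := ne_of_lt hq0
  have hmp : -(p / q) = 1 - p := by
    rw [neg_eq_iff_eq_neg, div_eq_iff hqne]; linarith
  have hconj : (1/p).HolderConjugate (1/(1-p)) := by
    constructor
    · simp only [one_div, inv_inv, inv_one]; ring
    · exact div_pos one_pos hp
    · exact div_pos one_pos h1p
  have hy := Real.young_inequality_of_nonneg
    (Real.rpow_nonneg (mul_nonneg ha hs.le) p) (Real.rpow_nonneg hs.le (-p)) hconj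
  have e1 : ((a * s) ^ p) ^ (1/p) = a * s := by
    rw [← Real.rpow_mul (mul_nonneg ha hs.le), mul_one_div_cancel hp.ne', Real.rpow_one]
  have e2 : (s ^ (-p)) ^ (1/(1-p)) = s ^ q := by
    rw [← Real.rpow_mul hs.le]
    congr 1
    field_simp
    linarith
  have e3 : (a * s) ^ p * s ^ (-p) = a ^ p := by
    rw [Real.mul_rpow ha hs.le, mul_assoc, ← Real.rpow_add hs]
    simp
  rw [e1, e2, e3] at hy
  have e4 : a * s / (1/p) + s ^ q / (1/(1-p)) = p * (a * s - s ^ q / q) := by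
    rw [div_div_eq_mul_div, div_one, div_div_eq_mul_div, div_one,
      show p * (a * s - s ^ q / q) = a * s * p + s ^ q * (-(p/q)) by ring, hmp]
  rw [e4] at hy
  exact hy

theorem key_bounds {p q u : ℝ} (hp : 0 < p) (hp1 : p < 1) (hpq : (1 - p) * q = -p)
    (hu : 0 < u) (t : ℝ) :
    |t| ^ p ≤ hApprox p q u t ∧ hApprox p q u t ≤ |t| ^ p + (1 - p) * u ^ q := by
  have h1p : 0 < 1 - p := by linarith
  have hq0 : q < 0 := by nlinarith
  have hqne : q ≠ 0 := ne_of_lt hq0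
  have hmp : -(p / q) = 1 - p := by
    rw [neg_eq_iff_eq_neg, div_eq_iff hqne]; linarith
  have hbdd : BddBelow ((fun s : ℝ => p * (|t| * s - s ^ q / q)) '' Set.Ioc 0 u) := by
    refine ⟨|t| ^ p, ?_⟩
    rintro y ⟨s, ⟨hs0, hsu⟩, rfl⟩
    exact rev_young hp hp1 hpq (abs_nonneg t) hs0
  have humem : u ∈ Set.Ioc (0:ℝ) u := ⟨hu, le_refl u⟩
  constructor
  · apply le_csInf ((Set.nonempty_Ioc.mpr hu).image _)
    rintro y ⟨s, ⟨hs0, hsu⟩, rfl⟩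
    exact rev_young hp hp1 hpq (abs_nonneg t) hs0
  · have huq : 0 < u ^ q := Real.rpow_pos_of_pos hu q
    rcases eq_or_lt_of_le (abs_nonneg t) with h0 | ht
    · have hle := csInf_le hbdd ⟨u, humem, rfl⟩
      refine hle.trans ?_
      show p * (|t| * u - u ^ q / q) ≤ |t| ^ p + (1 - p) * u ^ q
      rw [← h0, Real.zero_rpow hp.ne']
      have heq : p * (0 * u - u ^ q / q) = (1 - p) * u ^ q := by
        rw [show p * (0 * u - u ^ q / q) = u ^ q * (-(p/q)) by ring, hmp]; ring
      linarith
    · set a := |t| with ha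
      by_cases hcase : a ^ (p - 1) ≤ u
      · have hs0 : 0 < a ^ (p - 1) := Real.rpow_pos_of_pos ht _
        have hle := csInf_le hbdd ⟨a ^ (p-1), ⟨hs0, hcase⟩, rfl⟩
        refine hle.trans ?_
        show p * (a * a ^ (p-1) - (a ^ (p-1)) ^ q / q) ≤ a ^ p + (1 - p) * u ^ q
        have e1 : a * a ^ (p - 1) = a ^ p := by
          nth_rewrite 1 [← Real.rpow_one a]
          rw [← Real.rpow_add ht]; ring_nf
        have e2 : (a ^ (p - 1)) ^ q = a ^ p := by
          rw [← Real.rpow_mul (le_of_lt ht)]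
          congr 1
          nlinarith
        rw [e1, e2]
        have hap : 0 < a ^ p := Real.rpow_pos_of_pos ht p
        have hq1 : p * (1 - 1/q) = 1 := by
          field_simp
          nlinarith
        have : p * (a ^ p - a ^ p / q) = a ^ p * (p * (1 - 1/q)) := by ring
        rw [this, hq1, mul_one]
        nlinarith
      · push_neg at hcase
        have hle := csInf_le hbdd ⟨u, humem, rfl⟩
        refine hle.trans ?_
        show p * (a * u - u ^ q / q) ≤ a ^ p + (1 - p) * u ^ q
        have hau : a * u ≤ a ^ p := by
          have h2 : a * u ≤ a * a ^ (p-1) :=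
            mul_le_mul_of_nonneg_left hcase.le (abs_nonneg t)
          have e1 : a * a ^ (p - 1) = a ^ p := by
            nth_rewrite 1 [← Real.rpow_one a]
            rw [← Real.rpow_add ht]; ring_nf
          exact h2.trans (le_of_eq e1)
        have ha0 : 0 ≤ a * u := mul_nonneg (abs_nonneg t) hu.le
        have heq : p * (a * u - u ^ q / q) = p * (a * u) + (1 - p) * u ^ q := by
          rw [show p * (a * u - u ^ q / q) = p * (a * u) + u ^ q * (-(p/q)) by ring, hmp]
          ring
        nlinarith

/-- With u_ε = (ε/(λn))^(1/q) and F_ε(x) = f(x) + λ Σ_i h_{u_ε}(x_i),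
one has 0 ≤ F_ε(x) - F(x) ≤ ε where F(x) = f(x) + λ‖x‖_p^p. -/
theorem stmt_7 (n : ℕ) (hn : 1 ≤ n) (p q lam eps : ℝ) (hp : 0 < p) (hp1 : p < 1)
    (hq : 1 / p + 1 / q = 1) (hlam : 0 < lam) (heps : 0 < eps)
    (f : (Fin n → ℝ) → ℝ) (x : Fin n → ℝ) :
    0 ≤ (f x + lam * ∑ i, hApprox p q ((eps / (lam * n)) ^ (1 / q)) (x i)) -
          (f x + lam * ∑ i, |x i| ^ p) ∧
      (f x + lam * ∑ i, hApprox p q ((eps / (lam * n)) ^ (1 / q)) (x i)) -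
          (f x + lam * ∑ i, |x i| ^ p) ≤ eps := by
  have h1p : 0 < 1 - p := by linarith
  have h1q : 1 / q < 0 := by
    have : 1 < 1 / p := by rw [lt_div_iff₀ hp]; linarith
    linarith
  have hq0 : q < 0 := by
    by_contra h
    push_neg at h
    rcases eq_or_lt_of_le h with h' | h'
    · rw [← h'] at h1q; simp at h1q
    · exact absurd (le_of_lt (div_pos one_pos h')) (not_le.mpr h1q)
  have hqne : q ≠ 0 := ne_of_lt hq0
  have hpq : (1 - p) * q = -p := by
    field_simp at hq
    nlinarith
  have hn' : (0:ℝ) < (n:ℝ) := by exact_mod_cast Nat.lt_of_lt_of_le Nat.zero_lt_one hn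
  have hbase : 0 < eps / (lam * n) := div_pos heps (mul_pos hlam hn')
  set u : ℝ := (eps / (lam * n)) ^ (1 / q) with hudef
  have hu : 0 < u := Real.rpow_pos_of_pos hbase _
  have huq : u ^ q = eps / (lam * n) := by
    rw [hudef, ← Real.rpow_mul hbase.le, one_div_mul_cancel hqne, Real.rpow_one]
  have hkey := fun i : Fin n => key_bounds hp hp1 hpq hu (x i)
  have hlow : ∑ i, |x i| ^ p ≤ ∑ i, hApprox p q u (x i) :=
    Finset.sum_le_sum fun i _ => (hkey i).1
  have hhigh : ∑ i, hApprox p q u (x i) ≤ (∑ i, |x i| ^ p) + n * ((1 - p) * u ^ q) := by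
    calc ∑ i, hApprox p q u (x i) ≤ ∑ i, (|x i| ^ p + (1 - p) * u ^ q) :=
          Finset.sum_le_sum fun i _ => (hkey i).2
      _ = (∑ i, |x i| ^ p) + n * ((1 - p) * u ^ q) := by
          rw [Finset.sum_add_distrib, Finset.sum_const, Finset.card_univ, Fintype.card_fin,
            nsmul_eq_mul]
  constructor
  · have := mul_le_mul_of_nonneg_left hlow hlam.le
    linarith
  · have h2 := mul_le_mul_of_nonneg_left hhigh hlam.le
    have heq : lam * ((∑ i, |x i| ^ p) + n * ((1 - p) * u ^ q)) =
        lam * (∑ i, |x i| ^ p) + (1 - p) * eps := by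
      rw [huq]
      field_simp
    rw [heq] at h2
    nlinarith
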